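/- Let A be a unital Banach algebra, G a group, w : G → A a group homomorphism into the invertible isometries of A, and let g ∈ G. Suppose that for every ε > 0 there exist n ∈ ℕ and h₁,…,hₙ ∈ G such that ‖(1/n)∑ⱼ w(hⱼ g hⱼ⁻¹)‖ < ε. Then for every continuous linear functional σ : A → ℂ with σ(ab) = σ(ba) for all a,b ∈ A, we have σ(w(g)) = 0. -/

import Mathlib

/-- if `g` has the g-Powers property, then every continuous tracial
linear functional vanishes on `w g`. -/
theorem gPowers_trace_vanishes
    {A : Type*} [NormedRing A] [NormOneClass A] [NormedAlgebra ℂ A] [CompleteSpace A]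
    {G : Type*} [Group G] (w : G →* Aˣ)
    (hw : ∀ k : G, ‖((w k : Aˣ) : A)‖ = 1)
    (hw' : ∀ k : G, ‖(((w k)⁻¹ : Aˣ) : A)‖ = 1)
    (g : G)
    (hPowers : ∀ ε : ℝ, 0 < ε →
      ∃ (n : ℕ) (h : Fin n → G), 0 < n ∧
        ‖(n : ℝ)⁻¹ • ∑ j : Fin n, ((w (h j * g * (h j)⁻¹) : Aˣ) : A)‖ < ε) :
    ∀ σ : A →L[ℂ] ℂ, (∀ a b : A, σ (a * b) = σ (b * a)) → σ ((w g : Aˣ) : A) = 0 := by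
  intro σ htr
  -- key: σ is conjugation invariant
  have hconj : ∀ k : G, σ ((w (k * g * k⁻¹) : Aˣ) : A) = σ ((w g : Aˣ) : A) := by
    intro k
    have : ((w (k * g * k⁻¹) : Aˣ) : A) = ((w k : Aˣ) : A) * (((w g : Aˣ) : A) * ((w k⁻¹ : Aˣ) : A)) := by
      simp [map_mul, mul_assoc]
    rw [this, htr]
    have : ((w g : Aˣ) : A) * ((w k⁻¹ : Aˣ) : A) * ((w k : Aˣ) : A)
        = ((w g : Aˣ) : A) * (((w k⁻¹ : Aˣ) : A) * ((w k : Aˣ) : A)) := mul_assoc _ _ _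
    rw [this]
    have h2 : ((w k⁻¹ : Aˣ) : A) * ((w k : Aˣ) : A) = 1 := by
      rw [← Units.val_mul, ← map_mul]
      simp
    rw [h2, mul_one]
  have key : ∀ ε : ℝ, 0 < ε → ‖σ ((w g : Aˣ) : A)‖ ≤ ‖σ‖ * ε := by
    intro ε hε
    obtain ⟨n, h, hn, hlt⟩ := hPowers ε hε
    set x : A := (n : ℝ)⁻¹ • ∑ j : Fin n, ((w (h j * g * (h j)⁻¹) : Aˣ) : A) with hx
    have hσx : σ x = σ ((w g : Aˣ) : A) := by
      rw [hx, σ.map_smul_of_tower, map_sum]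
      have : ∀ j : Fin n, σ ((w (h j * g * (h j)⁻¹) : Aˣ) : A) = σ ((w g : Aˣ) : A) :=
        fun j => hconj (h j)
      rw [Finset.sum_congr rfl (fun j _ => this j), Finset.sum_const, Finset.card_univ,
        Fintype.card_fin, nsmul_eq_mul, Complex.real_smul]
      have hn' : (n : ℂ) ≠ 0 := Nat.cast_ne_zero.mpr hn.ne'
      push_cast
      field_simp
    calc ‖σ ((w g : Aˣ) : A)‖ = ‖σ x‖ := by rw [hσx]
      _ ≤ ‖σ‖ * ‖x‖ := σ.le_opNorm x
      _ ≤ ‖σ‖ * ε := by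
          exact mul_le_mul_of_nonneg_left hlt.le (norm_nonneg σ)
  have : ‖σ ((w g : Aˣ) : A)‖ ≤ 0 := by
    by_contra hc
    push_neg at hc
    rcases eq_or_lt_of_le (norm_nonneg σ) with hσ0 | hσ0
    · have := key 1 one_pos
      rw [← hσ0, zero_mul] at this
      exact absurd this (not_le.mpr hc)
    · have := key (‖σ ((w g : Aˣ) : A)‖ / (2 * ‖σ‖)) (by positivity)
      have h2 : ‖σ‖ * (‖σ ((w g : Aˣ) : A)‖ / (2 * ‖σ‖)) = ‖σ ((w g : Aˣ) : A)‖ / 2 := by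
        field_simp
      rw [h2] at this
      linarith
  exact norm_le_zero_iff.mp this
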